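/- Suppose a triangle T ⊂ ℝ² is covered by three closed sets R_A, R_B, R_C such that R_A is disjoint from side BC, R_B is disjoint from side CA, and R_C is disjoint from side AB. Then R_A ∩ R_B ∩ R_C ≠ ∅. -/

import Mathlib

open MeasureTheory Real EuclideanGeometry
open scoped RealInnerProductSpace

def tri (A B C : EuclideanSpace ℝ (Fin 2)) : Set (EuclideanSpace ℝ (Fin 2)) :=
  convexHull ℝ {A, B, C}

/-- The region of the Steinhaus partition of triangle `ABC` (determined by the
perpendiculars through `X` to the side lines) that contains the vertex `A`. -/
def steinRegion (A B C X : EuclideanSpace ℝ (Fin 2)) : Set (EuclideanSpace ℝ (Fin 2)) :=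
  tri A B C ∩ {Y | (inner ℝ (Y - X) (B - A) : ℝ) ≤ 0 ∧ (inner ℝ (Y - X) (C - A) : ℝ) ≤ 0}

/-- `sP A B C X` is the area of the Steinhaus region at vertex `A`;
the areas at `B` and `C` are `sP B A C X` and `sP C A B X`. -/
noncomputable def sP (A B C X : EuclideanSpace ℝ (Fin 2)) : ℝ :=
  (volume (steinRegion A B C X)).toReal

noncomputable def triArea (A B C : EuclideanSpace ℝ (Fin 2)) : ℝ :=
  (volume (tri A B C)).toReal

def Acute (A B C : EuclideanSpace ℝ (Fin 2)) : Prop :=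
  ∠ B A C < π/2 ∧ ∠ A B C < π/2 ∧ ∠ B C A < π/2

section KKMAux
open Filter Finset

noncomputable def gridPt (A B C : EuclideanSpace ℝ (Fin 2)) (n i j : ℕ) :
    EuclideanSpace ℝ (Fin 2) :=
  A + ((i : ℝ)/n) • (B - A) + ((j : ℝ)/n) • (C - A)

lemma gridPt_mem_tri (A B C : EuclideanSpace ℝ (Fin 2)) {n i j : ℕ} (hn : 0 < n)
    (hij : i + j ≤ n) : gridPt A B C n i j ∈ tri A B C := by
  have hn' : (0:ℝ) < n := by exact_mod_cast hn
  have key : gridPt A B C n i j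
      = ∑ k : Fin 3, (![1 - (i:ℝ)/n - (j:ℝ)/n, (i:ℝ)/n, (j:ℝ)/n] k) • (![A, B, C] k) := by
    simp only [Fin.sum_univ_three, Matrix.cons_val_zero, Matrix.cons_val_one, Matrix.head_cons,
      Matrix.cons_val_two, Matrix.tail_cons]
    unfold gridPt
    module
  rw [key]
  refine (convex_convexHull ℝ _).sum_mem ?_ ?_ ?_
  · intro k _
    have hc : (i:ℝ) + (j:ℝ) ≤ (n:ℝ) := by exact_mod_cast hij
    have h1 : (i:ℝ)/n + (j:ℝ)/n ≤ 1 := by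
      rw [← add_div, div_le_one hn']
      exact hc
    fin_cases k <;> simp <;> first
      | positivity
      | linarith
  · simp only [Fin.sum_univ_three, Matrix.cons_val_zero, Matrix.cons_val_one, Matrix.head_cons,
      Matrix.cons_val_two, Matrix.tail_cons]
    ring
  · intro k _
    fin_cases k
    · exact subset_convexHull ℝ _ (by simp)
    · exact subset_convexHull ℝ _ (by simp)
    · exact subset_convexHull ℝ _ (by simp)

lemma gridPt_mem_BC (A B C : EuclideanSpace ℝ (Fin 2)) {n i j : ℕ} (hn : 0 < n)
    (hij : i + j = n) : gridPt A B C n i j ∈ segment ℝ B C := by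
  have hn' : (0:ℝ) < n := by exact_mod_cast hn
  refine ⟨(i:ℝ)/n, (j:ℝ)/n, by positivity, by positivity, ?_, ?_⟩
  · rw [← add_div, div_eq_one_iff_eq hn'.ne']
    exact_mod_cast hij
  · have hs : (i:ℝ)/n + (j:ℝ)/n = 1 := by
      rw [← add_div, div_eq_one_iff_eq hn'.ne']
      exact_mod_cast hij
    unfold gridPt
    have : (1 : ℝ) - (i:ℝ)/n - (j:ℝ)/n = 0 := by linarith
    rw [show ((i:ℝ)/n) • B + ((j:ℝ)/n) • C =
        ((1:ℝ) - (i:ℝ)/n - (j:ℝ)/n) • A + ((i:ℝ)/n) • B + ((j:ℝ)/n) • C by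
      rw [this]; simp]
    module

lemma gridPt_mem_CA (A B C : EuclideanSpace ℝ (Fin 2)) {n j : ℕ} (hn : 0 < n)
    (hj : j ≤ n) : gridPt A B C n 0 j ∈ segment ℝ C A := by
  have hn' : (0:ℝ) < n := by exact_mod_cast hn
  have hj' : (j:ℝ) ≤ (n:ℝ) := by exact_mod_cast hj
  refine ⟨(j:ℝ)/n, 1 - (j:ℝ)/n, by positivity, ?_, by ring, ?_⟩
  · rw [sub_nonneg, div_le_one hn']; exact hj'
  · unfold gridPt
    module

lemma gridPt_mem_AB (A B C : EuclideanSpace ℝ (Fin 2)) {n i : ℕ} (hn : 0 < n)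
    (hi : i ≤ n) : gridPt A B C n i 0 ∈ segment ℝ A B := by
  have hn' : (0:ℝ) < n := by exact_mod_cast hn
  have hi' : (i:ℝ) ≤ (n:ℝ) := by exact_mod_cast hi
  refine ⟨1 - (i:ℝ)/n, (i:ℝ)/n, ?_, by positivity, by ring, ?_⟩
  · rw [sub_nonneg, div_le_one hn']; exact hi'
  · unfold gridPt
    module

lemma gridPt_dist (A B C : EuclideanSpace ℝ (Fin 2)) {n i j a b a' b' : ℕ} (hn : 0 < n)
    (ha : a ≤ 1) (hb : b ≤ 1) (ha' : a' ≤ 1) (hb' : b' ≤ 1) :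
    dist (gridPt A B C n (i+a) (j+b)) (gridPt A B C n (i+a') (j+b'))
      ≤ (‖B - A‖ + ‖C - A‖) / n := by
  have hn' : (0:ℝ) < n := by exact_mod_cast hn
  have key : gridPt A B C n (i+a) (j+b) - gridPt A B C n (i+a') (j+b')
      = (((a:ℝ) - a')/n) • (B - A) + (((b:ℝ) - b')/n) • (C - A) := by
    unfold gridPt
    push_cast
    module
  rw [dist_eq_norm, key]
  calc ‖(((a:ℝ) - a')/n) • (B - A) + (((b:ℝ) - b')/n) • (C - A)‖
      ≤ ‖(((a:ℝ) - a')/n) • (B - A)‖ + ‖(((b:ℝ) - b')/n) • (C - A)‖ := norm_add_le _ _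
    _ = |((a:ℝ) - a')/n| * ‖B - A‖ + |((b:ℝ) - b')/n| * ‖C - A‖ := by
        rw [norm_smul, norm_smul]; rfl
    _ ≤ (1/n) * ‖B - A‖ + (1/n) * ‖C - A‖ := by
        have habs : ∀ x y : ℕ, x ≤ 1 → y ≤ 1 → |((x:ℝ) - y)/n| ≤ 1/n := by
          intro x y hx hy
          rw [abs_div, abs_of_pos hn']
          gcongr
          have hx' : (x:ℝ) ≤ 1 := by exact_mod_cast hx
          have hy' : (y:ℝ) ≤ 1 := by exact_mod_cast hy
          have hx0 : (0:ℝ) ≤ x := Nat.cast_nonneg x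
          have hy0 : (0:ℝ) ≤ y := Nat.cast_nonneg y
          rw [abs_le]; constructor <;> linarith
        have hBA : (0:ℝ) ≤ ‖B - A‖ := norm_nonneg _
        have hCA : (0:ℝ) ≤ ‖C - A‖ := norm_nonneg _
        have := habs a a' ha ha'
        have := habs b b' hb hb'
        have h2 : |((a:ℝ) - a')/n| * ‖B - A‖ ≤ (1/n) * ‖B - A‖ := by gcongr
        have h3 : |((b:ℝ) - b')/n| * ‖C - A‖ ≤ (1/n) * ‖C - A‖ := by gcongr
        linarith
    _ = (‖B - A‖ + ‖C - A‖) / n := by ring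

open Finset

/-- `spf a b` is `1` if `(a,b) = (0,1)`, `-1` if `(a,b) = (1,0)`, else `0`. -/
def spf : Fin 3 → Fin 3 → ℤ := fun a b =>
  if a = 0 ∧ b = 1 then 1 else if a = 1 ∧ b = 0 then -1 else 0

def spψ : Fin 3 → ℤ := ![0, 1, 0]

lemma spf_eq_zero_of_ne_one {a b : Fin 3} (ha : a ≠ 1) (hb : b ≠ 1) : spf a b = 0 := by
  revert ha hb; revert a b; decide

lemma spf_eq_zero_of_ne_zero {a b : Fin 3} (ha : a ≠ 0) (hb : b ≠ 0) : spf a b = 0 := by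
  revert ha hb; revert a b; decide

lemma spf_eq_psi {a b : Fin 3} (ha : a ≠ 2) (hb : b ≠ 2) : spf a b = spψ b - spψ a := by
  revert ha hb; revert a b; decide

lemma spf_up {a b c : Fin 3} (h : spf a b + spf b c - spf a c ≠ 0) :
    ∀ v : Fin 3, v = a ∨ v = b ∨ v = c := by
  revert h; revert a b c; decide

lemma spf_down {a b c : Fin 3} (h : spf a c - spf b c - spf a b ≠ 0) :
    ∀ v : Fin 3, v = a ∨ v = b ∨ v = c := by
  revert h; revert a b c; decide

lemma sperner (n : ℕ) (hn : 0 < n) (ℓ : ℕ → ℕ → Fin 3)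
    (h0 : ∀ i j, i + j = n → ℓ i j ≠ 0)
    (h1 : ∀ j, j ≤ n → ℓ 0 j ≠ 1)
    (h2 : ∀ i, i ≤ n → ℓ i 0 ≠ 2) :
    ∃ i j, i + j + 1 ≤ n ∧
      ∀ v : Fin 3, ∃ a b, a ≤ 1 ∧ b ≤ 1 ∧ i + a + (j + b) ≤ n ∧ ℓ (i + a) (j + b) = v := by
  classical
  set fh : ℕ → ℕ → ℤ := fun i j => spf (ℓ i j) (ℓ (i+1) j) with hfh
  set fv : ℕ → ℕ → ℤ := fun i j => spf (ℓ i j) (ℓ i (j+1)) with hfv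
  set fd : ℕ → ℕ → ℤ := fun i j => spf (ℓ (i+1) j) (ℓ i (j+1)) with hfd
  set U : ℕ → ℕ → ℤ := fun i j => if i + j + 1 ≤ n then fh i j + fd i j - fv i j else 0 with hU
  set D : ℕ → ℕ → ℤ := fun i j =>
    if i + j + 2 ≤ n then fv (i+1) j - fh i (j+1) - fd i j else 0 with hD
  set gh : ℕ → ℕ → ℤ := fun i j => if i + j + 1 ≤ n then fh i j else 0 with hgh
  set gv : ℕ → ℕ → ℤ := fun i j => if i + j + 1 ≤ n then fv i j else 0 with hgv
  set gd : ℕ → ℕ → ℤ := fun i j => if i + j + 1 ≤ n then fd i j else 0 with hgd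
  set gd' : ℕ → ℕ → ℤ := fun i j => if i + j + 2 ≤ n then fd i j else 0 with hgd'
  -- decomposition of the summand
  have hsum : ∀ i j, U i j + D i j =
      (gh i j - gh i (j+1)) + (gv (i+1) j - gv i j) + (gd i j - gd' i j) := by
    intro i j
    simp only [hU, hD, hgh, hgv, hgd, hgd']
    have h12 : i + j + 2 ≤ n → i + j + 1 ≤ n := by omega
    have h1' : i + (j+1) + 1 = i + j + 2 := by omega
    have h2' : (i+1) + j + 1 = i + j + 2 := by omega
    rw [h1', h2']
    split_ifs with hc1 hc2 <;> omega
  -- diag terms vanish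
  have hdiag : ∀ i j, gd i j - gd' i j = 0 := by
    intro i j
    simp only [hgd, hgd']
    split_ifs with hc1 hc2
    · ring
    · have he : i + j + 1 = n := by omega
      have e1 : (i+1) + j = n := by omega
      have e2 : i + (j+1) = n := by omega
      simp [hfd, spf_eq_zero_of_ne_zero (h0 _ _ e1) (h0 _ _ e2)]
    · omega
    · ring
  -- total sum S
  by_contra hcon
  push_neg at hcon
  have hUD : ∀ i j, i ∈ range n → j ∈ range n → U i j + D i j = 0 := by
    intro i j hi hj
    have hU0 : U i j = 0 := by
      simp only [hU]
      split_ifs with hc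
      · by_contra hne
        rcases hcon i j (by omega) with ⟨v, hv⟩
        have := spf_up (a := ℓ i j) (b := ℓ (i+1) j) (c := ℓ i (j+1)) hne v
        rcases this with h | h | h
        · exact hv 0 0 (by omega) (by omega) (by omega) h.symm
        · exact hv 1 0 (by omega) (by omega) (by omega) h.symm
        · exact hv 0 1 (by omega) (by omega) (by omega) h.symm
      · rfl
    have hD0 : D i j = 0 := by
      simp only [hD]
      split_ifs with hc
      · by_contra hne
        rcases hcon i j (by omega) with ⟨v, hv⟩
        have hne' : spf (ℓ (i+1) j) (ℓ (i+1) (j+1)) - spf (ℓ i (j+1)) (ℓ (i+1) (j+1))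
            - spf (ℓ (i+1) j) (ℓ i (j+1)) ≠ 0 := by
          simp only [hfv, hfh, hfd] at hne
          intro hz; apply hne; linarith
        have := spf_down (a := ℓ (i+1) j) (b := ℓ i (j+1)) (c := ℓ (i+1) (j+1)) hne' v
        rcases this with h | h | h
        · exact hv 1 0 (by omega) (by omega) (by omega) h.symm
        · exact hv 0 1 (by omega) (by omega) (by omega) h.symm
        · exact hv 1 1 (by omega) (by omega) (by omega) h.symm
      · rfl
    rw [hU0, hD0]; ring
  -- Now compute S two ways
  have hS0 : ∑ i ∈ range n, ∑ j ∈ range n, (U i j + D i j) = 0 :=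
    Finset.sum_eq_zero fun i hi => Finset.sum_eq_zero fun j hj => hUD i j hi hj
  have hSsplit : ∑ i ∈ range n, ∑ j ∈ range n, (U i j + D i j)
      = (∑ i ∈ range n, ∑ j ∈ range n, (gh i j - gh i (j+1)))
      + (∑ i ∈ range n, ∑ j ∈ range n, (gv (i+1) j - gv i j)) := by
    have : ∀ i j, U i j + D i j = (gh i j - gh i (j+1)) + (gv (i+1) j - gv i j) := by
      intro i j
      rw [hsum i j, hdiag i j]; ring
    rw [← Finset.sum_add_distrib]
    refine Finset.sum_congr rfl fun i _ => ?_
    rw [← Finset.sum_add_distrib]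
    exact Finset.sum_congr rfl fun j _ => this i j
  have hgv0 : ∀ j, j ∈ range n → ∑ i ∈ range n, (gv (i+1) j - gv i j) = 0 := by
    intro j hj
    rw [Finset.sum_range_sub (f := fun i => gv i j)]
    have hn' : ¬ (n + j + 1 ≤ n) := by omega
    have hj' : j + 1 ≤ n := by simp at hj; omega
    simp only [hgv, hfv, hn', if_false, if_pos (show 0 + j + 1 ≤ n by omega)]
    rw [spf_eq_zero_of_ne_one (h1 j (by omega)) (h1 (j+1) hj')]
    ring
  have hgh0 : ∀ i, i ∈ range n → ∑ j ∈ range n, (gh i j - gh i (j+1)) = fh i 0 := by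
    intro i hi
    rw [Finset.sum_range_sub' (f := fun j => gh i j)]
    have hn' : ¬ (i + n + 1 ≤ n) := by omega
    have hi' : i + 0 + 1 ≤ n := by simp at hi; omega
    simp only [hgh, hn', if_false, if_pos hi']
    ring
  have htel : ∑ i ∈ range n, fh i 0 = 1 := by
    have hstep : ∀ i, i ∈ range n → fh i 0 = spψ (ℓ (i+1) 0) - spψ (ℓ i 0) := by
      intro i hi
      simp only [hfh]
      exact spf_eq_psi (h2 i (by simp at hi; omega)) (h2 (i+1) (by simp at hi; omega))
    rw [Finset.sum_congr rfl hstep, Finset.sum_range_sub (f := fun i => spψ (ℓ i 0))]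
    have hn0 : ℓ n 0 = 1 := by
      have e0 := h0 n 0 (by omega)
      have e2 := h2 n le_rfl
      revert e0 e2
      generalize ℓ n 0 = a
      revert a; decide
    have h00 : ℓ 0 0 = 0 := by
      have e1 := h1 0 (by omega)
      have e2 := h2 0 (by omega)
      revert e1 e2
      generalize ℓ 0 0 = a
      revert a; decide
    rw [hn0, h00]; rfl
  rw [hSsplit, Finset.sum_congr rfl hgh0, htel,
    Finset.sum_comm (f := fun i j => gv (i+1) j - gv i j),
    Finset.sum_congr rfl hgv0] at hS0
  simp at hS0



end KKMAux

open Filter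
open scoped Topology

theorem kkm_triangle (A B C : EuclideanSpace ℝ (Fin 2))
    (h : AffineIndependent ℝ ![A, B, C])
    (RA RB RC : Set (EuclideanSpace ℝ (Fin 2)))
    (hcA : IsClosed RA) (hcB : IsClosed RB) (hcC : IsClosed RC)
    (hcover : tri A B C ⊆ RA ∪ RB ∪ RC)
    (hdA : RA ∩ segment ℝ B C = ∅)
    (hdB : RB ∩ segment ℝ C A = ∅)
    (hdC : RC ∩ segment ℝ A B = ∅) :
    (RA ∩ RB ∩ RC).Nonempty := by
  classical
  set K := ‖B - A‖ + ‖C - A‖ with hK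
  have hK0 : 0 ≤ K := by positivity
  have main : ∀ n : ℕ, ∃ x y z : EuclideanSpace ℝ (Fin 2),
      x ∈ RA ∧ x ∈ tri A B C ∧ y ∈ RB ∧ z ∈ RC ∧
      dist x y ≤ K / (n + 1) ∧ dist x z ≤ K / (n + 1) := by
    intro n
    set m := n + 1 with hm
    have hm0 : 0 < m := Nat.succ_pos n
    set ℓ : ℕ → ℕ → Fin 3 := fun i j =>
      if gridPt A B C m i j ∈ RA then 0
      else if gridPt A B C m i j ∈ RB then 1 else 2 with hℓ
    have hl0 : ∀ i j, ℓ i j = 0 → gridPt A B C m i j ∈ RA := by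
      intro i j h
      simp only [hℓ] at h
      split_ifs at h with h1 h2
      · exact h1
      · exact absurd h (by decide)
      · exact absurd h (by decide)
    have hl1 : ∀ i j, ℓ i j = 1 → gridPt A B C m i j ∈ RB := by
      intro i j h
      simp only [hℓ] at h
      split_ifs at h with h1 h2
      · exact absurd h (by decide)
      · exact h2
      · exact absurd h (by decide)
    have hl2 : ∀ i j, i + j ≤ m → ℓ i j = 2 → gridPt A B C m i j ∈ RC := by
      intro i j hij h
      simp only [hℓ] at h
      split_ifs at h with h1 h2
      · exact absurd h (by decide)
      · exact absurd h (by decide)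
      · rcases hcover (gridPt_mem_tri A B C hm0 hij) with (hA | hB) | hC
        · exact absurd hA h1
        · exact absurd hB h2
        · exact hC
    have h0 : ∀ i j, i + j = m → ℓ i j ≠ 0 := by
      intro i j hij hc
      exact Set.eq_empty_iff_forall_notMem.mp hdA _
        ⟨hl0 i j hc, gridPt_mem_BC A B C hm0 hij⟩
    have h1 : ∀ j, j ≤ m → ℓ 0 j ≠ 1 := by
      intro j hj hc
      exact Set.eq_empty_iff_forall_notMem.mp hdB _
        ⟨hl1 0 j hc, gridPt_mem_CA A B C hm0 hj⟩
    have h2 : ∀ i, i ≤ m → ℓ i 0 ≠ 2 := by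
      intro i hi hc
      exact Set.eq_empty_iff_forall_notMem.mp hdC _
        ⟨hl2 i 0 (by omega) hc, gridPt_mem_AB A B C hm0 hi⟩
    obtain ⟨i, j, hij, hv⟩ := sperner m hm0 ℓ h0 h1 h2
    obtain ⟨a0, b0, ha0, hb0, hs0, he0⟩ := hv 0
    obtain ⟨a1, b1, ha1, hb1, hs1, he1⟩ := hv 1
    obtain ⟨a2, b2, ha2, hb2, hs2, he2⟩ := hv 2
    have hmcast : ((m : ℝ)) = (n : ℝ) + 1 := by push_cast [hm]; ring
    refine ⟨gridPt A B C m (i+a0) (j+b0), gridPt A B C m (i+a1) (j+b1),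
      gridPt A B C m (i+a2) (j+b2), hl0 _ _ he0, gridPt_mem_tri A B C hm0 hs0,
      hl1 _ _ he1, hl2 _ _ hs2 he2, ?_, ?_⟩
    · have := gridPt_dist A B C (i := i) (j := j) hm0 ha0 hb0 ha1 hb1
      rwa [hmcast] at this
    · have := gridPt_dist A B C (i := i) (j := j) hm0 ha0 hb0 ha2 hb2
      rwa [hmcast] at this
  choose x y z hxA hxT hyB hzC hxy hxz using main
  have hcomp : IsCompact (tri A B C) := by
    have hfin : ({A, B, C} : Set (EuclideanSpace ℝ (Fin 2))).Finite :=
      (Set.finite_singleton C).insert B |>.insert A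
    exact hfin.isCompact_convexHull (𝕜 := ℝ)
  obtain ⟨p, hp, φ, hφ, hlim⟩ := hcomp.tendsto_subseq hxT
  have hK1 : Tendsto (fun k : ℕ => K / ((k : ℝ) + 1)) atTop (𝓝 0) := by
    apply Tendsto.div_atTop tendsto_const_nhds
    exact tendsto_atTop_add_const_right atTop 1 tendsto_natCast_atTop_atTop
  have hKφ : Tendsto (fun k : ℕ => K / ((φ k : ℝ) + 1)) atTop (𝓝 0) := by
    refine squeeze_zero (fun k => by positivity) (fun k => ?_) hK1
    gcongr
    exact_mod_cast hφ.le_apply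
  have hylim : Tendsto (fun k => y (φ k)) atTop (𝓝 p) := by
    refine hlim.congr_dist ?_
    refine squeeze_zero (fun k => dist_nonneg) (fun k => ?_) hKφ
    exact hxy (φ k)
  have hzlim : Tendsto (fun k => z (φ k)) atTop (𝓝 p) := by
    refine hlim.congr_dist ?_
    refine squeeze_zero (fun k => dist_nonneg) (fun k => ?_) hKφ
    exact hxz (φ k)
  have hpA : p ∈ RA := hcA.mem_of_tendsto hlim (Eventually.of_forall fun k => hxA (φ k))
  have hpB : p ∈ RB := hcB.mem_of_tendsto hylim (Eventually.of_forall fun k => hyB (φ k))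
  have hpC : p ∈ RC := hcC.mem_of_tendsto hzlim (Eventually.of_forall fun k => hzC (φ k))
  exact ⟨p, ⟨hpA, hpB⟩, hpC⟩
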